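/- Let X be a σ_{C(X)}-β-defavorable space, K a pseudocompact space, and f : X × K → ℝ a separately continuous map. Suppose that every bounded subspace of C_p(X) is relatively countably compact in C_p(X). Then there is a dense Gδ subset R of X such that f is jointly continuous at each point of R × K. -/

import Mathlib

open Set Topology Filter

namespace SepJoint

/-- The list `[f 0, …, f (n-1)]` of the first `n` values of a sequence. -/
def hist {A : Type*} (f : ℕ → A) (n : ℕ) : List A := List.ofFn (fun i : Fin n => f i)

variable (X : Type*) [TopologicalSpace X]

/-- A strategy for player β in games of type `𝒥` (with points): from the list of α's
previous moves `(Uᵢ, aᵢ)`, produce β's next open set `Vₙ`. -/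
abbrev BetaStrategy := List (Set X × X) → Set X

/-- A strategy for player α in games of type `𝒥`: from the list `[V₀, …, Vₙ]` of β's moves
(the last being the one to respond to), produce α's move `(Uₙ, aₙ)`. -/
abbrev AlphaStrategy := List (Set X) → Set X × X

/-- A strategy for player β in games of type `𝒥*`: from the list of α's previous
moves `Uᵢ`, produce β's next open set `Vₙ`. -/
abbrev BetaStrategyStar := List (Set X) → Set X

/-- A strategy for player α in games of type `𝒥*`. -/
abbrev AlphaStrategyStar := List (Set X) → Set X

variable {X}

/-! ### Games of type `𝒥` (α plays pairs `(Uₙ, aₙ)`) -/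

/-- α has played legally against the β-strategy `σ` at all stages `< n`:
each `Uᵢ` is a nonempty open subset of β's move `Vᵢ = σ(history)`. -/
def AlphaLegal (σ : BetaStrategy X) (U : ℕ → Set X) (a : ℕ → X) (n : ℕ) : Prop :=
  ∀ i < n, IsOpen (U i) ∧ (U i).Nonempty ∧ U i ⊆ σ (hist (fun j => (U j, a j)) i)

/-- `σ` is a legal strategy for β: against any legal finite history it produces a nonempty
open set contained in α's previous move. -/
def BetaLegal (σ : BetaStrategy X) : Prop :=
  ∀ (U : ℕ → Set X) (a : ℕ → X) (n : ℕ), AlphaLegal σ U a n →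
    IsOpen (σ (hist (fun j => (U j, a j)) n)) ∧
    (σ (hist (fun j => (U j, a j)) n)).Nonempty ∧
    ∀ m, n = m + 1 → σ (hist (fun j => (U j, a j)) n) ⊆ U m

/-- The winning condition for α in the game `𝒥_Γ` on the play with moves `(Uₙ, aₙ)`:
for each `g ∈ Γ` there is `t ∈ ⋂ₙ Uₙ` with `g t` in the closure of `{g (aₙ) : n}`. -/
def AlphaWinsGamma (Γ : Set (X → ℝ)) (U : ℕ → Set X) (a : ℕ → X) : Prop :=
  ∀ g ∈ Γ, ∃ t ∈ (⋂ n, U n), g t ∈ closure (Set.range fun n => g (a n))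

/-- The winning condition for α in the game `𝒥` on the play with moves `(Uₙ, aₙ)`:
`(⋂ₙ Uₙ) ∩ closure {aₙ : n} ≠ ∅`. -/
def AlphaWinsPlain (U : ℕ → Set X) (a : ℕ → X) : Prop :=
  ((⋂ n, U n) ∩ closure (Set.range a)).Nonempty

/-- `σ` is a winning strategy for β in the game `𝒥_Γ`. -/
def BetaWinningGamma (Γ : Set (X → ℝ)) (σ : BetaStrategy X) : Prop :=
  BetaLegal σ ∧ ∀ U a, (∀ n, AlphaLegal σ U a n) → ¬ AlphaWinsGamma Γ U a

/-- `σ` is a winning strategy for β in the game `𝒥`. -/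
def BetaWinningPlain (σ : BetaStrategy X) : Prop :=
  BetaLegal σ ∧ ∀ U a, (∀ n, AlphaLegal σ U a n) → ¬ AlphaWinsPlain U a

/-- `X` is σ_Γ-β-defavorable: β has no winning strategy in the game `𝒥_Γ`. -/
def SigmaGammaBetaDefavorable (X : Type*) [TopologicalSpace X] (Γ : Set (X → ℝ)) : Prop :=
  ¬ ∃ σ : BetaStrategy X, BetaWinningGamma Γ σ

/-- `X` is σ-β-defavorable: β has no winning strategy in the game `𝒥`. -/
def SigmaBetaDefavorable (X : Type*) [TopologicalSpace X] : Prop :=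
  ¬ ∃ σ : BetaStrategy X, BetaWinningPlain σ

/-- Given the α-strategy `τ` and β's moves `V`, α's `n`-th move `(Uₙ, aₙ) = τ [V₀, …, Vₙ]`. -/
def alphaMove (τ : AlphaStrategy X) (V : ℕ → Set X) (n : ℕ) : Set X × X :=
  τ (hist V (n + 1))

/-- `τ` is a legal strategy for α: along any legal history of β-moves it answers with a
nonempty open subset of β's last move. -/
def AlphaStratLegal (τ : AlphaStrategy X) : Prop :=
  ∀ (V : ℕ → Set X) (n : ℕ), (IsOpen (V 0) ∧ (V 0).Nonempty) →
    (∀ i < n, IsOpen (V (i + 1)) ∧ (V (i + 1)).Nonempty ∧ V (i + 1) ⊆ (alphaMove τ V i).1) →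
    IsOpen (alphaMove τ V n).1 ∧ (alphaMove τ V n).1.Nonempty ∧ (alphaMove τ V n).1 ⊆ V n

/-- `V` is a full run of legal moves of β against the α-strategy `τ`. -/
def BetaLegalRun (τ : AlphaStrategy X) (V : ℕ → Set X) : Prop :=
  IsOpen (V 0) ∧ (V 0).Nonempty ∧
    ∀ n, IsOpen (V (n + 1)) ∧ (V (n + 1)).Nonempty ∧ V (n + 1) ⊆ (alphaMove τ V n).1

/-- `τ` is a conditionally winning strategy for α in the game `𝒥_Γ`: every compatible play
with `⋂ₙ Uₙ ≠ ∅` fulfils the winning condition for α. -/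
def CondAlphaWinningGamma (Γ : Set (X → ℝ)) (τ : AlphaStrategy X) : Prop :=
  AlphaStratLegal τ ∧
    ∀ V, BetaLegalRun τ V → (⋂ n, (alphaMove τ V n).1).Nonempty →
      AlphaWinsGamma Γ (fun n => (alphaMove τ V n).1) (fun n => (alphaMove τ V n).2)

/-- `X` is conditionally σ_Γ-α-favorable. -/
def CondSigmaGammaAlphaFavorable (X : Type*) [TopologicalSpace X] (Γ : Set (X → ℝ)) : Prop :=
  ∃ τ : AlphaStrategy X, CondAlphaWinningGamma Γ τ

/-- `τ` is a conditionally winning strategy for α in the game `𝒥`. -/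
def CondAlphaWinningPlain (τ : AlphaStrategy X) : Prop :=
  AlphaStratLegal τ ∧
    ∀ V, BetaLegalRun τ V → (⋂ n, (alphaMove τ V n).1).Nonempty →
      AlphaWinsPlain (fun n => (alphaMove τ V n).1) (fun n => (alphaMove τ V n).2)

/-- `X` is conditionally σ-α-favorable. -/
def CondSigmaAlphaFavorable (X : Type*) [TopologicalSpace X] : Prop :=
  ∃ τ : AlphaStrategy X, CondAlphaWinningPlain τ

/-! ### Games of type `𝒥*` (α plays only open sets) -/

/-- α has played legally against the β-strategy `σ` in `𝒥*` at all stages `< n`. -/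
def AlphaLegalStar (σ : BetaStrategyStar X) (U : ℕ → Set X) (n : ℕ) : Prop :=
  ∀ i < n, IsOpen (U i) ∧ (U i).Nonempty ∧ U i ⊆ σ (hist U i)

/-- `σ` is a legal strategy for β in `𝒥*`. -/
def BetaLegalStar (σ : BetaStrategyStar X) : Prop :=
  ∀ (U : ℕ → Set X) (n : ℕ), AlphaLegalStar σ U n →
    IsOpen (σ (hist U n)) ∧ (σ (hist U n)).Nonempty ∧ ∀ m, n = m + 1 → σ (hist U n) ⊆ U m

/-- The winning condition for α in the game `𝒥*_Γ` on the play with α-moves `Uₙ`: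
for every sequence `(aₙ)` with `aₙ ∈ Uₙ` and every `g ∈ Γ`, there is `t ∈ ⋂ₙ Uₙ` with
`g t` in the closure of `{g (aₙ) : n}`. -/
def AlphaWinsStar (Γ : Set (X → ℝ)) (U : ℕ → Set X) : Prop :=
  ∀ a : ℕ → X, (∀ n, a n ∈ U n) → ∀ g ∈ Γ,
    ∃ t ∈ (⋂ n, U n), g t ∈ closure (Set.range fun n => g (a n))

/-- `σ` is a winning strategy for β in the game `𝒥*_Γ`. -/
def BetaWinningStar (Γ : Set (X → ℝ)) (σ : BetaStrategyStar X) : Prop :=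
  BetaLegalStar σ ∧ ∀ U, (∀ n, AlphaLegalStar σ U n) → ¬ AlphaWinsStar Γ U

/-- `X` is σ*_Γ-β-defavorable: β has no winning strategy in `𝒥*_Γ`. -/
def SigmaStarBetaDefavorable (X : Type*) [TopologicalSpace X] (Γ : Set (X → ℝ)) : Prop :=
  ¬ ∃ σ : BetaStrategyStar X, BetaWinningStar Γ σ

/-- Given the α-strategy `τ` and β's moves `V`, α's `n`-th move `Uₙ = τ [V₀, …, Vₙ]` in `𝒥*`. -/
def alphaMoveStar (τ : AlphaStrategyStar X) (V : ℕ → Set X) (n : ℕ) : Set X :=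
  τ (hist V (n + 1))

/-- `τ` is a legal strategy for α in `𝒥*`. -/
def AlphaStratLegalStar (τ : AlphaStrategyStar X) : Prop :=
  ∀ (V : ℕ → Set X) (n : ℕ), (IsOpen (V 0) ∧ (V 0).Nonempty) →
    (∀ i < n, IsOpen (V (i + 1)) ∧ (V (i + 1)).Nonempty ∧ V (i + 1) ⊆ alphaMoveStar τ V i) →
    IsOpen (alphaMoveStar τ V n) ∧ (alphaMoveStar τ V n).Nonempty ∧ alphaMoveStar τ V n ⊆ V n

/-- `V` is a full run of legal moves of β against the α-strategy `τ` in `𝒥*`. -/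
def BetaLegalRunStar (τ : AlphaStrategyStar X) (V : ℕ → Set X) : Prop :=
  IsOpen (V 0) ∧ (V 0).Nonempty ∧
    ∀ n, IsOpen (V (n + 1)) ∧ (V (n + 1)).Nonempty ∧ V (n + 1) ⊆ alphaMoveStar τ V n

/-- `τ` is a winning strategy for α in the game `𝒥*_Γ`. -/
def AlphaWinningStar (Γ : Set (X → ℝ)) (τ : AlphaStrategyStar X) : Prop :=
  AlphaStratLegalStar τ ∧
    ∀ V, BetaLegalRunStar τ V → AlphaWinsStar Γ (fun n => alphaMoveStar τ V n)

/-- `τ` is a conditionally winning strategy for α in the game `𝒥*_Γ`. -/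
def CondAlphaWinningStar (Γ : Set (X → ℝ)) (τ : AlphaStrategyStar X) : Prop :=
  AlphaStratLegalStar τ ∧
    ∀ V, BetaLegalRunStar τ V → (⋂ n, alphaMoveStar τ V n).Nonempty →
      AlphaWinsStar Γ (fun n => alphaMoveStar τ V n)

/-- `X` is σ*_Γ-α-favorable. -/
def SigmaStarAlphaFavorable (X : Type*) [TopologicalSpace X] (Γ : Set (X → ℝ)) : Prop :=
  ∃ τ : AlphaStrategyStar X, AlphaWinningStar Γ τ

/-- `X` is conditionally σ*_Γ-α-favorable. -/
def CondSigmaStarAlphaFavorable (X : Type*) [TopologicalSpace X] (Γ : Set (X → ℝ)) : Prop :=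
  ∃ τ : AlphaStrategyStar X, CondAlphaWinningStar Γ τ

/-! ### Auxiliary notions -/

/-- `f : X × K → ℝ` is separately continuous. -/
def SeparatelyContinuous {K : Type*} [TopologicalSpace K] (f : X × K → ℝ) : Prop :=
  (∀ x, Continuous fun y => f (x, y)) ∧ (∀ y, Continuous fun x => f (x, y))

/-- The map `φ : K → ℝ^X`, `φ(y)(x) = f(x, y)`. -/
def phi {X K : Type*} (f : X × K → ℝ) (y : K) : X → ℝ := fun x => f (x, y)

/-- A sequence `(Wₙ)` of subsets of `K` is countably pair complete with respect to `(φ, Γ)`: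
for all sequences `yₙ, zₙ ∈ Wₙ`, the sequence `φ(yₙ) - φ(zₙ)` has a cluster point in `Γ`
(`ℝ^X` carrying the product, i.e. pointwise convergence, topology). -/
def PairComplete {K : Type*} (f : X × K → ℝ) (Γ : Set (X → ℝ)) (W : ℕ → Set K) : Prop :=
  ∀ y z : ℕ → K, (∀ n, y n ∈ W n) → (∀ n, z n ∈ W n) →
    ∃ g ∈ Γ, MapClusterPt g atTop (fun n => phi f (y n) - phi f (z n))

/-- `f` is ε-continuous at `p`. -/
def EpsCont {K : Type*} [TopologicalSpace K] (f : X × K → ℝ) (ε : ℝ) (p : X × K) : Prop :=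
  ∃ O ∈ 𝓝 p, ∀ q ∈ O, |f p - f q| < ε

/-- `Y` is a bounded subset of `Z`: every continuous real-valued function on `Z`
is bounded on `Y`. -/
def BoundedIn {Z : Type*} [TopologicalSpace Z] (Y : Set Z) : Prop :=
  ∀ g : Z → ℝ, Continuous g → ∃ M, ∀ y ∈ Y, |g y| ≤ M

/-- `Y` is relatively countably compact in `Z`: every sequence in `Y` has a cluster
point in `Z`. -/
def RelCountablyCompact {Z : Type*} [TopologicalSpace Z] (Y : Set Z) : Prop :=
  ∀ u : ℕ → Z, (∀ n, u n ∈ Y) → ∃ z : Z, MapClusterPt z atTop u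

/-- `K` is pseudocompact: Tychonoff and every continuous real-valued function is bounded. -/
def Pseudocompact (K : Type*) [TopologicalSpace K] : Prop :=
  T35Space K ∧ BoundedIn (Set.univ : Set K)

/-- `Y` is Čech-complete: Tychonoff, and there is a sequence of open covers of `Y` which is
complete: any filter base of nonempty closed sets, containing for each `n` a set included
in a member of the `n`-th cover, has nonempty intersection. -/
def CechComplete (Y : Type*) [TopologicalSpace Y] : Prop :=
  T35Space Y ∧ ∃ 𝒰 : ℕ → Set (Set Y),
    (∀ n, ∀ U ∈ 𝒰 n, IsOpen U) ∧ (∀ n, ⋃₀ 𝒰 n = Set.univ) ∧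
    ∀ ℱ : Set (Set Y),
      (∀ F ∈ ℱ, IsClosed F) → ℱ.Nonempty → (∀ F ∈ ℱ, F.Nonempty) →
      (∀ F₁ ∈ ℱ, ∀ F₂ ∈ ℱ, ∃ F₃ ∈ ℱ, F₃ ⊆ F₁ ∩ F₂) →
      (∀ n, ∃ F ∈ ℱ, ∃ U ∈ 𝒰 n, F ⊆ U) →
      (⋂₀ ℱ).Nonempty

/-- `Y` is a p-space: Tychonoff, and there is a sequence `(𝒰ₙ)` of open covers of `Y` such
that each `x ∈ Y` has a sequence `Uₙ ∈ 𝒰ₙ` of members containing it whose intersection is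
compact and for which `(⋂_{i ≤ n} Uᵢ)ₙ` is an outer base of `⋂ₙ Uₙ`. -/
def PSpace (Y : Type*) [TopologicalSpace Y] : Prop :=
  T35Space Y ∧ ∃ 𝒰 : ℕ → Set (Set Y),
    (∀ n, ∀ U ∈ 𝒰 n, IsOpen U) ∧ (∀ n, ⋃₀ 𝒰 n = Set.univ) ∧
    ∀ x : Y, ∃ U : ℕ → Set Y, (∀ n, U n ∈ 𝒰 n) ∧ (∀ n, x ∈ U n) ∧
      IsCompact (⋂ n, U n) ∧
      ∀ W : Set Y, IsOpen W → (⋂ n, U n) ⊆ W → ∃ m, (⋂ i ≤ m, U i) ⊆ W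

/-- `X` is a Namioka space: for every compact Hausdorff `K`, every separately continuous
`f : X × K → ℝ` is jointly continuous at each point of `R × K` for some dense `R ⊆ X`. -/
def NamiokaSpace (X : Type*) [TopologicalSpace X] : Prop :=
  ∀ (K : Type*) [TopologicalSpace K], CompactSpace K → T2Space K →
    ∀ f : X × K → ℝ, SeparatelyContinuous f →
      ∃ R : Set X, Dense R ∧ ∀ x ∈ R, ∀ y : K, ContinuousAt f (x, y)

/-- `A` is C-embedded in `Y`: every continuous real-valued function on `A` extends
continuously to `Y`. -/
def CEmbedded {Y : Type*} [TopologicalSpace Y] (A : Set Y) : Prop :=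
  ∀ g : A → ℝ, Continuous g → ∃ G : Y → ℝ, Continuous G ∧ ∀ a : A, G a = g a

/-- `A` is C*-embedded in `Y`: every bounded continuous real-valued function on `A`
extends continuously to `Y`. -/
def CStarEmbedded {Y : Type*} [TopologicalSpace Y] (A : Set Y) : Prop :=
  ∀ g : A → ℝ, Continuous g → (∃ M, ∀ a, |g a| ≤ M) →
    ∃ G : Y → ℝ, Continuous G ∧ ∀ a : A, G a = g a

/-- The family `F ⊆ ℝ^X` is equicontinuous at `x`. -/
def EquicontAt (F : Set (X → ℝ)) (x : X) : Prop :=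
  ∀ ε > 0, ∃ U ∈ 𝓝 x, ∀ y ∈ U, ∀ g ∈ F, |g x - g y| < ε


section Aux

set_option linter.unusedSectionVars false

open SepJoint

variable {X : Type*} [TopologicalSpace X]

namespace SJAux

/-- The space of continuous real functions, as a subtype of `ℝ^X`. -/
abbrev Cp (X : Type*) [TopologicalSpace X] := {g : X → ℝ // Continuous g}

/-- Functional equivalence of points of `X`. -/
def FEq (X : Type*) [TopologicalSpace X] (x x' : X) : Prop :=
  ∀ g : X → ℝ, Continuous g → g x = g x'

lemma feq_symm {x x' : X} (h : FEq X x x') : FEq X x' x := fun g hg => (h g hg).symm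

lemma feq_trans {x x' x'' : X} (h : FEq X x x') (h' : FEq X x' x'') : FEq X x x'' :=
  fun g hg => (h g hg).trans (h' g hg)

/-- Interpolation: a finite consistent assignment of values is realized by a
continuous function. -/
lemma exists_interp (s : Finset X) (v : X → ℝ)
    (hv : ∀ x ∈ s, ∀ y ∈ s, FEq X x y → v x = v y) :
    ∃ g : X → ℝ, Continuous g ∧ ∀ x ∈ s, g x = v x := by
  classical
  revert hv
  induction s using Finset.strongInduction with
  | _ s ih =>
    intro hv
    rcases s.eq_empty_or_nonempty with rfl | ⟨x₀, hx₀⟩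
    · exact ⟨fun _ => 0, continuous_const, by simp⟩
    · set s' := s.filter (fun y => ¬ FEq X x₀ y) with hs'
      have hfeqr : FEq X x₀ x₀ := fun g _ => rfl
      have hss : s' ⊂ s := by
        refine Finset.filter_ssubset.2 ⟨x₀, hx₀, ?_⟩
        simp only [not_not]
        exact hfeqr
      obtain ⟨g', hg'c, hg'⟩ := ih s' hss
        (fun x hx y hy h => hv x (Finset.mem_of_mem_filter x hx) y
          (Finset.mem_of_mem_filter y hy) h)
      have hsep : ∀ y : {y // y ∈ s'}, ∃ gy : X → ℝ, Continuous gy ∧ gy x₀ ≠ gy y.1 := by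
        rintro ⟨y, hy⟩
        have hne : ¬ FEq X x₀ y := (Finset.mem_filter.1 hy).2
        rw [FEq] at hne
        push_neg at hne
        obtain ⟨gy, hgc, hgy⟩ := hne
        exact ⟨gy, hgc, hgy⟩
      choose gy hgyc hgyne using hsep
      set p : X → ℝ :=
        fun x => ∏ y ∈ s'.attach, (gy y x - gy y y.1) / (gy y x₀ - gy y y.1) with hp
      have hpc : Continuous p := by
        refine continuous_finset_prod _ fun y _ => ?_
        exact ((hgyc y).sub continuous_const).div_const _
      have hpx₀ : p x₀ = 1 := by
        rw [hp]
        refine Finset.prod_eq_one fun y _ => ?_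
        exact div_self (sub_ne_zero.2 (hgyne y))
      have hps' : ∀ z ∈ s', p z = 0 := by
        intro z hz
        rw [hp]
        refine Finset.prod_eq_zero (Finset.mem_attach s' ⟨z, hz⟩) ?_
        simp
      have hpfeq : ∀ x, FEq X x₀ x → p x = 1 := by
        intro x hfeq
        rw [hp]
        refine Finset.prod_eq_one fun y _ => ?_
        rw [← hfeq (gy y) (hgyc y)]
        exact div_self (sub_ne_zero.2 (hgyne y))
      refine ⟨fun x => g' x + (v x₀ - g' x₀) * p x,
        (hg'c.add (continuous_const.mul hpc)), ?_⟩
      intro x hx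
      show g' x + (v x₀ - g' x₀) * p x = v x
      by_cases hxs' : x ∈ s'
      · rw [hps' x hxs', hg' x hxs']
        ring
      · have hfeq : FEq X x₀ x := by
          by_contra hne
          exact hxs' (Finset.mem_filter.2 ⟨hx, hne⟩)
        have h1 : g' x₀ = g' x := hfeq g' hg'c
        have h2 : v x₀ = v x := hv x₀ hx₀ x hx hfeq
        rw [hpfeq x hfeq, ← h1, ← h2]
        ring

/-- Rational boxes: finite lists of (coordinate, rational open interval) constraints. -/
abbrev RBox (X : Type*) := List (X × ℚ × ℚ)

/-- Membership of a function in a rational box. -/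
def InBox (w : X → ℝ) (σ : RBox X) : Prop :=
  ∀ p ∈ σ, ((p.2.1 : ℝ) < w p.1 ∧ w p.1 < (p.2.2 : ℝ))

/-- The support of a box. -/
def bsupp (σ : RBox X) : Set X := {x | ∃ p ∈ σ, p.1 = x}

lemma bsupp_finite (σ : RBox X) : (bsupp σ).Finite := by
  have : bsupp σ = Prod.fst '' {p | p ∈ σ} := by
    ext x; simp [bsupp, Set.mem_image]
  rw [this]
  exact (σ.finite_toSet).image _

lemma isOpen_inBox (σ : RBox X) : IsOpen {g : Cp X | InBox g.1 σ} := by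
  have : {g : Cp X | InBox g.1 σ} =
      ⋂ p ∈ {q | q ∈ σ}, ({g : Cp X | (p.2.1 : ℝ) < g.1 p.1} ∩ {g : Cp X | g.1 p.1 < (p.2.2 : ℝ)}) := by
    ext g
    simp only [Set.mem_setOf_eq, Set.mem_iInter, Set.mem_inter_iff, InBox]
  rw [this]
  refine (σ.finite_toSet).isOpen_biInter fun p _ => ?_
  have hev : Continuous fun g : Cp X => g.1 p.1 :=
    (continuous_apply p.1).comp continuous_subtype_val
  exact (isOpen_lt continuous_const hev).inter (isOpen_lt hev continuous_const)

lemma lists_subset_countable {A : Type*} {C : Set A} (hC : C.Countable) :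
    {σ : List A | ∀ p ∈ σ, p ∈ C}.Countable := by
  classical
  have : Countable ↥C := hC.to_subtype
  have hsub : {σ : List A | ∀ p ∈ σ, p ∈ C} ⊆
      Set.range (fun l : List ↥C => l.map Subtype.val) := by
    intro σ hσ
    induction σ with
    | nil => exact ⟨[], rfl⟩
    | cons a σ' ihσ =>
      obtain ⟨l', hl'⟩ := ihσ (fun p hp => hσ p (List.mem_cons_of_mem a hp))
      exact ⟨⟨a, hσ a (List.mem_cons_self)⟩ :: l', by simp [hl']⟩
  exact (Set.countable_range _).mono hsub

lemma countable_rboxes {D : Set X} (hD : D.Countable) :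
    {σ : RBox X | bsupp σ ⊆ D}.Countable := by
  have hC : {p : X × ℚ × ℚ | p.1 ∈ D}.Countable := by
    have : {p : X × ℚ × ℚ | p.1 ∈ D} ⊆ D ×ˢ (Set.univ : Set (ℚ × ℚ)) := by
      intro p hp; exact ⟨hp, Set.mem_univ _⟩
    exact (hD.prod Set.countable_univ).mono this
  refine (lists_subset_countable hC).mono ?_
  intro σ hσ p hp
  exact hσ ⟨p, hp, rfl⟩

/-- Every point of an open set of `C_p(X)` has a rational box neighborhood inside it. -/
lemma exists_box_subset {O : Set (Cp X)} (hO : IsOpen O) {g : Cp X} (hg : g ∈ O) :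
    ∃ σ : RBox X, InBox g.1 σ ∧ {h : Cp X | InBox h.1 σ} ⊆ O := by
  classical
  obtain ⟨O', hO'o, hO'⟩ := isOpen_induced_iff.1 hO
  have hg' : g.1 ∈ O' := by rw [← hO'] at hg; exact hg
  obtain ⟨I, u, hu, hIu⟩ := isOpen_pi_iff.1 hO'o g.1 hg'
  have hq : ∀ i : X, ∃ q₁ q₂ : ℚ, i ∈ I →
      ((q₁ : ℝ) < g.1 i ∧ g.1 i < (q₂ : ℝ) ∧ Set.Ioo ((q₁ : ℝ)) ((q₂ : ℝ)) ⊆ u i) := by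
    intro i
    by_cases hiI : i ∈ I
    · obtain ⟨hui, hgi⟩ := hu i hiI
      obtain ⟨ε, hε, hball⟩ := Metric.isOpen_iff.1 hui (g.1 i) hgi
      obtain ⟨q₁, hq₁, hq₁'⟩ := exists_rat_btwn (show g.1 i - ε < g.1 i by linarith)
      obtain ⟨q₂, hq₂, hq₂'⟩ := exists_rat_btwn (show g.1 i < g.1 i + ε by linarith)
      refine ⟨q₁, q₂, fun _ => ⟨hq₁', hq₂, fun r hr => hball ?_⟩⟩
      rw [Metric.mem_ball, Real.dist_eq, abs_lt]
      obtain ⟨hr1, hr2⟩ := hr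
      constructor <;> linarith
    · exact ⟨0, 0, fun h => absurd h hiI⟩
  choose q₁ q₂ hqspec using hq
  refine ⟨I.toList.map (fun i => (i, q₁ i, q₂ i)), ?_, ?_⟩
  · rintro p hp
    rw [List.mem_map] at hp
    obtain ⟨i, hiI, rfl⟩ := hp
    rw [Finset.mem_toList] at hiI
    obtain ⟨h1, h2, _⟩ := hqspec i hiI
    exact ⟨h1, h2⟩
  · intro h hh
    have : h.1 ∈ O' := by
      refine hIu ?_
      intro i hiI
      obtain ⟨_, _, hIoo⟩ := hqspec i hiI
      refine hIoo ?_
      have := hh (i, q₁ i, q₂ i) (by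
        rw [List.mem_map]
        exact ⟨i, Finset.mem_toList.2 hiI, rfl⟩)
      exact ⟨this.1, this.2⟩
    rw [← hO']
    exact this

lemma exists_margin (w : X → ℝ) (γ : RBox X) (hw : InBox w γ) :
    ∃ θ : ℝ, 0 < θ ∧ ∀ p ∈ γ, (p.2.1 : ℝ) + θ ≤ w p.1 ∧ w p.1 + θ ≤ (p.2.2 : ℝ) := by
  induction γ with
  | nil => exact ⟨1, one_pos, by simp⟩
  | cons p γ' ih =>
    obtain ⟨θ', hθ', hspec⟩ := ih (fun q hq => hw q (List.mem_cons_of_mem p hq))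
    obtain ⟨h1, h2⟩ := hw p List.mem_cons_self
    refine ⟨min θ' (min (w p.1 - (p.2.1 : ℝ)) ((p.2.2 : ℝ) - w p.1)),
      lt_min hθ' (lt_min (by linarith) (by linarith)), ?_⟩
    intro q hq
    rcases List.mem_cons.1 hq with rfl | hq'
    · have ha : min θ' (min (w q.1 - (q.2.1 : ℝ)) ((q.2.2 : ℝ) - w q.1)) ≤
          w q.1 - (q.2.1 : ℝ) := (min_le_right _ _).trans (min_le_left _ _)
      have hb : min θ' (min (w q.1 - (q.2.1 : ℝ)) ((q.2.2 : ℝ) - w q.1)) ≤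
          (q.2.2 : ℝ) - w q.1 := (min_le_right _ _).trans (min_le_right _ _)
      constructor <;> linarith
    · obtain ⟨ha, hb⟩ := hspec q hq'
      have hle : min θ' (min (w p.1 - (p.2.1 : ℝ)) ((p.2.2 : ℝ) - w p.1)) ≤ θ' :=
        min_le_left _ _
      constructor <;> linarith

lemma eventually_forall_list {A : Type*} {P : ℕ → A → Prop} (σ : List A)
    (h : ∀ p ∈ σ, ∀ᶠ n in atTop, P n p) : ∀ᶠ n in atTop, ∀ p ∈ σ, P n p := by
  induction σ with
  | nil => simp
  | cons a σ' ih =>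
    filter_upwards [h a List.mem_cons_self,
      ih (fun p hp => h p (List.mem_cons_of_mem a hp))] with n h1 h2
    intro p hp
    rcases List.mem_cons.1 hp with rfl | hp'
    · exact h1
    · exact h2 p hp'

lemma exists_index_of_finite_subset {Ds : ℕ → Set X} (hmono : Monotone Ds)
    {F : Set X} (hF : F.Finite) (hsub : F ⊆ ⋃ k, Ds k) : ∃ k, F ⊆ Ds k := by
  classical
  revert hsub
  refine Set.Finite.induction_on (motive := fun F _ => F ⊆ ⋃ k, Ds k → ∃ k, F ⊆ Ds k) F hF (fun _ => ⟨0, by simp⟩) ?_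
  intro x F hxF hFfin ih hsub
  obtain ⟨k₁, hk₁⟩ := ih ((Set.subset_insert x F).trans hsub)
  obtain ⟨k₂, hk₂⟩ := Set.mem_iUnion.1 (hsub (Set.mem_insert x F))
  exact ⟨max k₁ k₂, Set.insert_subset (hmono (le_max_right k₁ k₂) hk₂)
    (hk₁.trans (hmono (le_max_left k₁ k₂)))⟩

/-- Key lemma: for every open `O ⊆ C_p(X)` there is a countable `D ⊆ X` such that
membership in `closure O` follows from pointwise convergence on `D` of members of `O`. -/
lemma dseq (O : Set (Cp X)) (hO : IsOpen O) :
    ∃ D : Set X, D.Countable ∧ ∀ (h : Cp X) (u : ℕ → Cp X), (∀ n, u n ∈ O) →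
      (∀ x ∈ D, Filter.Tendsto (fun n => (u n).1 x) atTop (𝓝 (h.1 x))) →
      h ∈ closure O := by
  classical
  rcases O.eq_empty_or_nonempty with rfl | hOne
  · exact ⟨∅, Set.countable_empty, fun h u hu _ => absurd (hu 0) (Set.notMem_empty _)⟩
  obtain ⟨g₀, hg₀⟩ := hOne
  have hwit : ∀ σ : RBox X, ∃ g : Cp X, ∃ τ : RBox X,
      (∃ g' ∈ O, InBox g'.1 σ) →
        (g ∈ O ∧ InBox g.1 σ ∧ InBox g.1 τ ∧ {h : Cp X | InBox h.1 τ} ⊆ O) := by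
    intro σ
    by_cases hσ : ∃ g' ∈ O, InBox g'.1 σ
    · obtain ⟨g', hg'O, hg'b⟩ := hσ
      obtain ⟨τ, hτ1, hτ2⟩ := exists_box_subset hO hg'O
      exact ⟨g', τ, fun _ => ⟨hg'O, hg'b, hτ1, hτ2⟩⟩
    · exact ⟨g₀, [], fun hc => absurd hc hσ⟩
  choose gw τw hwspec using hwit
  set step : Set X → Set X :=
    fun D => D ∪ ⋃ σ ∈ {σ : RBox X | bsupp σ ⊆ D}, bsupp (τw σ) with hstep
  have hstepc : ∀ D : Set X, D.Countable → (step D).Countable := fun D hD =>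
    hD.union (Set.Countable.biUnion (countable_rboxes hD)
      fun σ _ => (bsupp_finite (τw σ)).countable)
  set Ds : ℕ → Set X := fun k => step^[k] ∅ with hDs
  have hDsc : ∀ k, (Ds k).Countable := by
    intro k
    induction k with
    | zero => simpa [hDs] using Set.countable_empty
    | succ k ih =>
      have : Ds (k + 1) = step (Ds k) := by
        rw [hDs]; exact Function.iterate_succ_apply' step k ∅
      rw [this]; exact hstepc _ ih
  have hDsmono : Monotone Ds := by
    refine monotone_nat_of_le_succ fun k => ?_
    have : Ds (k + 1) = step (Ds k) := by
      rw [hDs]; exact Function.iterate_succ_apply' step k ∅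
    rw [this]
    exact Set.subset_union_left
  refine ⟨⋃ k, Ds k, Set.countable_iUnion (fun k => hDsc k), ?_⟩
  set D : Set X := ⋃ k, Ds k with hD
  have hstepD : ∀ (k : ℕ) (σ : RBox X), bsupp σ ⊆ Ds k → bsupp (τw σ) ⊆ D := by
    intro k σ hσ
    intro x hx
    refine Set.mem_iUnion.2 ⟨k + 1, ?_⟩
    have : Ds (k + 1) = step (Ds k) := by
      rw [hDs]; exact Function.iterate_succ_apply' step k ∅
    rw [this]
    exact Set.mem_union_right _ (Set.mem_biUnion hσ hx)
  intro h u huO hconv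
  rw [mem_closure_iff]
  intro o ho hho
  obtain ⟨γ, hγb, hγsub⟩ := exists_box_subset ho hho
  obtain ⟨θ, hθ, hmargin⟩ := exists_margin h.1 γ hγb
  set EF : Finset X := (bsupp_finite γ).toFinset with hEF
  set Efix : Finset X := EF.filter (fun x => ∃ x' ∈ D, FEq X x x') with hEfix
  set rep : X → X := fun x => if hx : ∃ x' ∈ D, FEq X x x' then hx.choose else x with hrepd
  have hrepspec : ∀ x, (∃ x' ∈ D, FEq X x x') → rep x ∈ D ∧ FEq X x (rep x) := by
    intro x hx
    simp only [hrepd, dif_pos hx]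
    exact ⟨hx.choose_spec.1, hx.choose_spec.2⟩
  have hqsel : ∀ x : X, ∃ q : ℚ × ℚ,
      (q.1 : ℝ) < h.1 (rep x) ∧ h.1 (rep x) < (q.2 : ℝ) ∧ (q.2 : ℝ) - (q.1 : ℝ) < θ := by
    intro x
    obtain ⟨q₁, hq₁, hq₁'⟩ := exists_rat_btwn
      (show h.1 (rep x) - θ / 2 < h.1 (rep x) by linarith)
    obtain ⟨q₂, hq₂, hq₂'⟩ := exists_rat_btwn
      (show h.1 (rep x) < h.1 (rep x) + θ / 2 by linarith)
    exact ⟨(q₁, q₂), hq₁', hq₂, by linarith⟩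
  choose qsel hqspec using hqsel
  set σ : RBox X := Efix.toList.map (fun x => (rep x, qsel x)) with hσdef
  have hmemσ : ∀ x ∈ Efix, (rep x, qsel x) ∈ σ := by
    intro x hx
    rw [hσdef, List.mem_map]
    exact ⟨x, Finset.mem_toList.2 hx, rfl⟩
  have hsuppσ : bsupp σ ⊆ D := by
    rintro w ⟨p, hp, rfl⟩
    rw [hσdef, List.mem_map] at hp
    obtain ⟨x, hx, rfl⟩ := hp
    rw [Finset.mem_toList, hEfix, Finset.mem_filter] at hx
    exact (hrepspec x hx.2).1
  obtain ⟨k, hk⟩ := exists_index_of_finite_subset hDsmono (bsupp_finite σ) hsuppσ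
  have hev : ∀ p ∈ σ, ∀ᶠ n in atTop,
      ((p.2.1 : ℝ) < (u n).1 p.1 ∧ (u n).1 p.1 < (p.2.2 : ℝ)) := by
    intro p hp
    rw [hσdef, List.mem_map] at hp
    obtain ⟨x, hx, rfl⟩ := hp
    rw [Finset.mem_toList, hEfix, Finset.mem_filter] at hx
    have hrx : rep x ∈ D := (hrepspec x hx.2).1
    obtain ⟨ha, hb, -⟩ := hqspec x
    have h1 := hconv (rep x) hrx (Ioo_mem_nhds ha hb)
    filter_upwards [h1] with n hn
    exact ⟨hn.1, hn.2⟩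
  obtain ⟨n₀, hn₀⟩ := (eventually_forall_list σ hev).exists
  have hHσ : ∃ g' ∈ O, InBox g'.1 σ := ⟨u n₀, huO n₀, hn₀⟩
  obtain ⟨hgwO, hgwσ, hgwτ, hτsub⟩ := hwspec σ hHσ
  have hsuppτ : bsupp (τw σ) ⊆ D := hstepD k σ hk
  set gσ : Cp X := gw σ with hgσ
  set vfun : X → ℝ :=
    fun x => if hx : ∃ c ∈ bsupp (τw σ), FEq X x c then gσ.1 hx.choose else h.1 x with hv
  have hvcons : ∀ x y, FEq X x y → vfun x = vfun y := by
    intro x y hxy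
    by_cases hx : ∃ c ∈ bsupp (τw σ), FEq X x c
    · have hy : ∃ c ∈ bsupp (τw σ), FEq X y c :=
        ⟨hx.choose, hx.choose_spec.1, feq_trans (feq_symm hxy) hx.choose_spec.2⟩
      rw [hv]
      simp only [dif_pos hx, dif_pos hy]
      have hch : FEq X hx.choose hy.choose :=
        feq_trans (feq_symm hx.choose_spec.2) (feq_trans hxy hy.choose_spec.2)
      exact hch gσ.1 gσ.2
    · have hy : ¬ ∃ c ∈ bsupp (τw σ), FEq X y c := by
        rintro ⟨c, hc, hyc⟩
        exact hx ⟨c, hc, feq_trans hxy hyc⟩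
      rw [hv]
      simp only [dif_neg hx, dif_neg hy]
      exact hxy h.1 h.2
  have hvτ : ∀ c ∈ bsupp (τw σ), vfun c = gσ.1 c := by
    intro c hc
    have hcx : ∃ c' ∈ bsupp (τw σ), FEq X c c' := ⟨c, hc, fun g _ => rfl⟩
    rw [hv]
    simp only [dif_pos hcx]
    exact (feq_symm hcx.choose_spec.2) gσ.1 gσ.2
  obtain ⟨g₂, hg₂c, hg₂⟩ := exists_interp ((bsupp_finite (τw σ)).toFinset ∪ EF) vfun
    (fun x _ y _ hxy => hvcons x y hxy)
  have hg₂τ : InBox g₂ (τw σ) := by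
    intro p hp
    have hps : p.1 ∈ (bsupp_finite (τw σ)).toFinset ∪ EF :=
      Finset.mem_union_left _ ((Set.Finite.mem_toFinset _).2 ⟨p, hp, rfl⟩)
    rw [hg₂ p.1 hps, hvτ p.1 ⟨p, hp, rfl⟩]
    exact hgwτ p hp
  have hg₂γ : InBox g₂ γ := by
    intro p hp
    have hpE : p.1 ∈ EF := (Set.Finite.mem_toFinset _).2 ⟨p, hp, rfl⟩
    have hps : p.1 ∈ (bsupp_finite (τw σ)).toFinset ∪ EF := Finset.mem_union_right _ hpE
    rw [hg₂ p.1 hps]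
    by_cases hx : ∃ c ∈ bsupp (τw σ), FEq X p.1 c
    · obtain ⟨hm1, hm2⟩ := hmargin p hp
      have hxE : p.1 ∈ Efix := by
        rw [hEfix, Finset.mem_filter]
        exact ⟨hpE, hx.choose, hsuppτ hx.choose_spec.1, hx.choose_spec.2⟩
      have hxD : ∃ x' ∈ D, FEq X p.1 x' :=
        ⟨hx.choose, hsuppτ hx.choose_spec.1, hx.choose_spec.2⟩
      obtain ⟨hrD, hrfeq⟩ := hrepspec p.1 hxD
      have hval : vfun p.1 = gσ.1 (rep p.1) := by
        rw [hv]
        simp only [dif_pos hx]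
        have h1 : FEq X hx.choose (rep p.1) :=
          feq_trans (feq_symm hx.choose_spec.2) hrfeq
        exact h1 gσ.1 gσ.2
      rw [hval]
      have hbox := hgwσ (rep p.1, qsel p.1) (hmemσ p.1 hxE)
      obtain ⟨hqa, hqb, hqw⟩ := hqspec p.1
      have hh : h.1 p.1 = h.1 (rep p.1) := hrfeq h.1 h.2
      obtain ⟨hb1, hb2⟩ := hbox
      rw [hh] at hm1 hm2
      exact ⟨by linarith, by linarith⟩
    · have hval : vfun p.1 = h.1 p.1 := by
        rw [hv]
        simp only [dif_neg hx]
      rw [hval]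
      exact hγb p hp
  exact ⟨⟨g₂, hg₂c⟩, hγsub hg₂γ, hτsub hg₂τ⟩

/-- Restriction property: every continuous real function on `C_p(X)` is sequentially
continuous through a countable set of coordinates. -/
lemma star (G : Cp X → ℝ) (hG : Continuous G) :
    ∃ D : Set X, D.Countable ∧ ∀ (h : Cp X) (u : ℕ → Cp X),
      (∀ x ∈ D, Filter.Tendsto (fun n => (u n).1 x) atTop (𝓝 (h.1 x))) →
      Filter.Tendsto (fun n => G (u n)) atTop (𝓝 (G h)) := by
  classical
  choose D₁ hD₁c hD₁ using fun q : ℚ => dseq (G ⁻¹' Set.Ioi (q : ℝ)) (isOpen_Ioi.preimage hG)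
  choose D₂ hD₂c hD₂ using fun q : ℚ => dseq (G ⁻¹' Set.Iio (q : ℝ)) (isOpen_Iio.preimage hG)
  refine ⟨(⋃ q : ℚ, D₁ q) ∪ ⋃ q : ℚ, D₂ q,
    (Set.countable_iUnion fun q => hD₁c q).union (Set.countable_iUnion fun q => hD₂c q), ?_⟩
  intro h u hconv
  have hconv' : ∀ q : ℚ, ∀ x ∈ D₁ q, Filter.Tendsto (fun n => (u n).1 x) atTop (𝓝 (h.1 x)) :=
    fun q x hx => hconv x (Set.mem_union_left _ (Set.mem_iUnion.2 ⟨q, hx⟩))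
  have hconv'' : ∀ q : ℚ, ∀ x ∈ D₂ q, Filter.Tendsto (fun n => (u n).1 x) atTop (𝓝 (h.1 x)) :=
    fun q x hx => hconv x (Set.mem_union_right _ (Set.mem_iUnion.2 ⟨q, hx⟩))
  by_contra hnot
  rw [Metric.tendsto_atTop] at hnot
  push_neg at hnot
  obtain ⟨ε, hε, hfreq⟩ := hnot
  have hfreq' : ∃ᶠ n in atTop, (G h + ε ≤ G (u n) ∨ G (u n) ≤ G h - ε) := by
    rw [Filter.frequently_atTop]
    intro N
    obtain ⟨n, hnN, hn⟩ := hfreq N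
    rw [Real.dist_eq, le_abs] at hn
    rcases hn with hn | hn
    · exact ⟨n, hnN, Or.inl (by linarith)⟩
    · exact ⟨n, hnN, Or.inr (by linarith)⟩
  rw [Filter.frequently_or_distrib] at hfreq'
  rcases hfreq' with hf1 | hf2
  · obtain ⟨φ, hφ, hφspec⟩ := Filter.extraction_of_frequently_atTop hf1
    obtain ⟨q, hq1, hq2⟩ := exists_rat_btwn (show G h < G h + ε by linarith)
    have hmem : ∀ k, u (φ k) ∈ G ⁻¹' Set.Ioi (q : ℝ) := by
      intro k
      have := hφspec k
      simp only [Set.mem_preimage, Set.mem_Ioi]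
      linarith
    have hcl : h ∈ closure (G ⁻¹' Set.Ioi (q : ℝ)) := by
      refine hD₁ q h (fun k => u (φ k)) hmem ?_
      intro x hx
      exact (hconv' q x hx).comp hφ.tendsto_atTop
    have : G h ∈ Set.Ici (q : ℝ) := by
      have hsub : closure (G ⁻¹' Set.Ioi (q : ℝ)) ⊆ G ⁻¹' Set.Ici (q : ℝ) :=
        closure_minimal (Set.preimage_mono Set.Ioi_subset_Ici_self)
          (isClosed_Ici.preimage hG)
      exact hsub hcl
    rw [Set.mem_Ici] at this
    linarith
  · obtain ⟨φ, hφ, hφspec⟩ := Filter.extraction_of_frequently_atTop hf2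
    obtain ⟨q, hq1, hq2⟩ := exists_rat_btwn (show G h - ε < G h by linarith)
    have hmem : ∀ k, u (φ k) ∈ G ⁻¹' Set.Iio (q : ℝ) := by
      intro k
      have := hφspec k
      simp only [Set.mem_preimage, Set.mem_Iio]
      linarith
    have hcl : h ∈ closure (G ⁻¹' Set.Iio (q : ℝ)) := by
      refine hD₂ q h (fun k => u (φ k)) hmem ?_
      intro x hx
      exact (hconv'' q x hx).comp hφ.tendsto_atTop
    have : G h ∈ Set.Iic (q : ℝ) := by
      have hsub : closure (G ⁻¹' Set.Iio (q : ℝ)) ⊆ G ⁻¹' Set.Iic (q : ℝ) :=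
        closure_minimal (Set.preimage_mono Set.Iio_subset_Iic_self)
          (isClosed_Iic.preimage hG)
      exact hsub hcl
    rw [Set.mem_Iic] at this
    linarith

/-- Coordinate evaluation of a cluster point. -/
lemma mapClusterPt_apply {z : Cp X} {v : ℕ → Cp X} (hz : MapClusterPt z atTop v) (x : X) :
    MapClusterPt (z.1 x) atTop (fun n => (v n).1 x) := by
  have hev : Continuous fun g : Cp X => g.1 x :=
    (continuous_apply x).comp continuous_subtype_val
  exact hz.continuousAt_comp hev.continuousAt

/-- A cluster point of a convergent real sequence equals the limit. -/
lemma cluster_eq_limit {c L : ℝ} {v : ℕ → ℝ} (hc : MapClusterPt c atTop v)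
    (hv : Filter.Tendsto v atTop (𝓝 L)) : c = L := by
  have h1 : (𝓝 c ⊓ Filter.map v atTop).NeBot := hc
  have h2 : 𝓝 c ⊓ Filter.map v atTop ≤ 𝓝 c ⊓ 𝓝 L := inf_le_inf_left _ hv
  exact eq_of_nhds_neBot (h1.mono h2)

section WithK

variable {K : Type*} [TopologicalSpace K]

/-- The map `φ : K → C_p(X)`. -/
noncomputable def phiSub (f : X × K → ℝ) (hf : SeparatelyContinuous f) (y : K) : Cp X :=
  ⟨fun x => f (x, y), hf.2 y⟩

lemma continuous_phiSub (f : X × K → ℝ) (hf : SeparatelyContinuous f) :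
    Continuous (phiSub f hf) :=
  Continuous.subtype_mk (continuous_pi fun x => hf.1 x) _

lemma bounded_phiSub_range (f : X × K → ℝ) (hf : SeparatelyContinuous f)
    (hK2 : BoundedIn (Set.univ : Set K)) :
    BoundedIn (Set.range (phiSub f hf)) := by
  intro G hG
  obtain ⟨M, hM⟩ := hK2 (G ∘ phiSub f hf) (hG.comp (continuous_phiSub f hf))
  refine ⟨M, ?_⟩
  rintro w ⟨y, rfl⟩
  exact hM y (Set.mem_univ y)

/-- The difference function `φ(y) - φ(z)` as an element of `C_p(X)`. -/
noncomputable def diffSub (f : X × K → ℝ) (hf : SeparatelyContinuous f) (y z : K) : Cp X :=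
  ⟨fun x => f (x, y) - f (x, z), ((hf.2 y).sub (hf.2 z))⟩

/-- Bounded subsequence-convergence extraction on a countable coordinate set. -/
lemma exists_subseq_tendsto_on (D : Set X) (hD : D.Countable)
    (M : X → ℝ) (p : ℕ → Cp X) (hM : ∀ x ∈ D, ∀ n, |(p n).1 x| ≤ M x) :
    ∃ φ : ℕ → ℕ, StrictMono φ ∧ ∃ L : X → ℝ,
      ∀ x ∈ D, Filter.Tendsto (fun k => (p (φ k)).1 x) atTop (𝓝 (L x)) := by
  classical
  have : Countable ↥D := hD.to_subtype
  set F : ℕ → (↥D → ℝ) := fun n x => (p n).1 x.1 with hF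
  have hScomp : IsCompact (Set.pi Set.univ fun x : ↥D => Set.Icc (-(M x.1)) (M x.1)) :=
    isCompact_univ_pi fun x => isCompact_Icc
  have hmem : ∀ n, F n ∈ Set.pi Set.univ fun x : ↥D => Set.Icc (-(M x.1)) (M x.1) := by
    intro n x _
    have := hM x.1 x.2 n
    rw [abs_le] at this
    exact this
  obtain ⟨ℓ, -, φ, hφ, hconv⟩ := hScomp.tendsto_subseq hmem
  refine ⟨φ, hφ, fun x => if hx : x ∈ D then ℓ ⟨x, hx⟩ else 0, ?_⟩
  intro x hx
  have := (tendsto_pi_nhds.1 hconv) ⟨x, hx⟩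
  simpa [hF, dif_pos hx] using this

/-- The set of differences along any sequences is bounded in `C_p(X)`. -/
lemma bounded_diffs (f : X × K → ℝ) (hf : SeparatelyContinuous f)
    (hK2 : BoundedIn (Set.univ : Set K))
    (hcc : ∀ Y : Set (Cp X), BoundedIn Y → RelCountablyCompact Y)
    (y z : ℕ → K) :
    BoundedIn (Set.range fun n => diffSub f hf (y n) (z n)) := by
  classical
  intro G hG
  by_contra hnb
  push_neg at hnb
  have hidx : ∀ M : ℝ, ∃ n : ℕ, M < |G (diffSub f hf (y n) (z n))| := by
    intro M
    obtain ⟨w, hw, hMw⟩ := hnb M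
    obtain ⟨n, rfl⟩ := hw
    exact ⟨n, hMw⟩
  choose ψ hψ using fun m : ℕ => hidx (m : ℝ)
  obtain ⟨DG, hDGc, hstar⟩ := star G hG
  have hMp : ∀ x : X, ∃ Mx : ℝ, ∀ y' : K, |f (x, y')| ≤ Mx := by
    intro x
    obtain ⟨Mx, hMx⟩ := hK2 (fun y' => f (x, y')) (hf.1 x)
    exact ⟨Mx, fun y' => hMx y' (Set.mem_univ _)⟩
  choose Mb hMb using hMp
  obtain ⟨φ₁, hφ₁, L₁, hL₁⟩ := exists_subseq_tendsto_on DG hDGc Mb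
    (fun m => phiSub f hf (y (ψ m))) (fun x hx m => hMb x (y (ψ m)))
  obtain ⟨φ₂, hφ₂, L₂, hL₂⟩ := exists_subseq_tendsto_on DG hDGc Mb
    (fun k => phiSub f hf (z (ψ (φ₁ k)))) (fun x hx k => hMb x _)
  set ρ : ℕ → ℕ := fun j => ψ (φ₁ (φ₂ j)) with hρ
  obtain ⟨uc, huc⟩ := hcc _ (bounded_phiSub_range f hf hK2)
    (fun j => phiSub f hf (y (ρ j))) (fun j => Set.mem_range_self _)
  obtain ⟨vc, hvc⟩ := hcc _ (bounded_phiSub_range f hf hK2)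
    (fun j => phiSub f hf (z (ρ j))) (fun j => Set.mem_range_self _)
  have hucL : ∀ x ∈ DG, uc.1 x = L₁ x := by
    intro x hx
    refine cluster_eq_limit (mapClusterPt_apply huc x) ?_
    exact (hL₁ x hx).comp hφ₂.tendsto_atTop
  have hvcL : ∀ x ∈ DG, vc.1 x = L₂ x := by
    intro x hx
    exact cluster_eq_limit (mapClusterPt_apply hvc x) (hL₂ x hx)
  set hd : Cp X := ⟨fun x => uc.1 x - vc.1 x, uc.2.sub vc.2⟩ with hhd
  have hconvd : ∀ x ∈ DG,
      Filter.Tendsto (fun j => (diffSub f hf (y (ρ j)) (z (ρ j))).1 x) atTop (𝓝 (hd.1 x)) := by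
    intro x hx
    have h1 : Filter.Tendsto (fun j => f (x, y (ρ j))) atTop (𝓝 (L₁ x)) :=
      (hL₁ x hx).comp hφ₂.tendsto_atTop
    have h2 : Filter.Tendsto (fun j => f (x, z (ρ j))) atTop (𝓝 (L₂ x)) := hL₂ x hx
    have := h1.sub h2
    rw [hhd]
    simp only [diffSub]
    rw [hucL x hx, hvcL x hx]
    exact this
  have htend := hstar hd (fun j => diffSub f hf (y (ρ j)) (z (ρ j))) hconvd
  rw [Metric.tendsto_atTop] at htend
  obtain ⟨N, hN⟩ := htend 1 one_pos
  set j : ℕ := max N (⌈|G hd| + 1⌉₊) with hj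
  have h1 := hN j (le_max_left _ _)
  rw [Real.dist_eq] at h1
  have h2 : |G (diffSub f hf (y (ρ j)) (z (ρ j)))| ≤ |G hd| + 1 := by
    have := abs_sub_abs_le_abs_sub (G (diffSub f hf (y (ρ j)) (z (ρ j)))) (G hd)
    linarith
  have h3 : (φ₁ (φ₂ j) : ℝ) < |G (diffSub f hf (y (ρ j)) (z (ρ j)))| := hψ (φ₁ (φ₂ j))
  have h4 : (j : ℝ) ≤ (φ₁ (φ₂ j) : ℝ) := by
    exact_mod_cast (hφ₁.comp hφ₂).le_apply
  have h5 : |G hd| + 1 ≤ (j : ℝ) := by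
    calc |G hd| + 1 ≤ (⌈|G hd| + 1⌉₊ : ℝ) := Nat.le_ceil _
      _ ≤ (j : ℝ) := by exact_mod_cast le_max_right N _
  linarith

/-- Consequently, difference sequences have continuous cluster points. -/
lemma exists_cluster_diffs (f : X × K → ℝ) (hf : SeparatelyContinuous f)
    (hK2 : BoundedIn (Set.univ : Set K))
    (hcc : ∀ Y : Set (Cp X), BoundedIn Y → RelCountablyCompact Y)
    (y z : ℕ → K) :
    ∃ g : Cp X, MapClusterPt g atTop (fun n => diffSub f hf (y n) (z n)) := by
  obtain ⟨g, hg⟩ := hcc _ (bounded_diffs f hf hK2 hcc y z)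
    (fun n => diffSub f hf (y n) (z n)) (fun n => Set.mem_range_self n)
  exact ⟨g, hg⟩

/-- The `ε`-equicontinuity set. -/
def Eset (f : X × K → ℝ) (ε : ℝ) : Set X :=
  {x | ∃ U : Set X, IsOpen U ∧ x ∈ U ∧
    ∀ x' ∈ U, ∀ x'' ∈ U, ∀ y : K, |f (x', y) - f (x'', y)| ≤ ε}

lemma isOpen_Eset (f : X × K → ℝ) (ε : ℝ) : IsOpen (Eset f ε) := by
  rw [isOpen_iff_forall_mem_open]
  rintro x ⟨U, hUo, hxU, hU⟩
  exact ⟨U, fun u hu => ⟨U, hUo, hu, hU⟩, hUo, hxU⟩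

lemma Eset_mono (f : X × K → ℝ) {δ ε : ℝ} (h : δ ≤ ε) : Eset f δ ⊆ Eset f ε := by
  rintro x ⟨U, hUo, hxU, hU⟩
  exact ⟨U, hUo, hxU, fun x' hx' x'' hx'' y => (hU x' hx' x'' hx'' y).trans h⟩

lemma continuousAt_of_mem_Eset (f : X × K → ℝ) (hf : SeparatelyContinuous f) (x : X)
    (hx : ∀ ε > (0:ℝ), x ∈ Eset f ε) (y : K) : ContinuousAt f (x, y) := by
  rw [ContinuousAt, Metric.tendsto_nhds]
  intro ε hε
  obtain ⟨U, hUo, hxU, hU⟩ := hx (ε / 4) (by positivity)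
  set Vy : Set K := {y' | |f (x, y') - f (x, y)| < ε / 2} with hVy
  have hVo : IsOpen Vy := by
    have : Continuous fun y' => |f (x, y') - f (x, y)| :=
      ((hf.1 x).sub continuous_const).abs
    exact isOpen_lt this continuous_const
  have hyV : y ∈ Vy := by
    show |f (x, y) - f (x, y)| < ε / 2
    simp only [sub_self, abs_zero]
    positivity
  filter_upwards [prod_mem_nhds (hUo.mem_nhds hxU) (hVo.mem_nhds hyV)] with q hq
  obtain ⟨hq1, hq2⟩ := hq
  have h1 : |f (q.1, q.2) - f (x, q.2)| ≤ ε / 4 := hU q.1 hq1 x hxU q.2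
  have h2 : |f (x, q.2) - f (x, y)| < ε / 2 := hq2
  have : |f q - f (x, y)| < ε := by
    calc |f q - f (x, y)| ≤ |f (q.1, q.2) - f (x, q.2)| + |f (x, q.2) - f (x, y)| := by
          rw [show f q = f (q.1, q.2) by rfl]; exact abs_sub_le _ _ _
      _ < ε / 4 + ε / 2 := by linarith
      _ < ε := by linarith
  simpa [Real.dist_eq] using this

/-- The crux lemma: in completely non-equicontinuous territory, one can find a pair
with small difference at finitely many prescribed points and a definite gap somewhere. -/
lemma crux (f : X × K → ℝ) (hf : SeparatelyContinuous f)
    (hK2 : BoundedIn (Set.univ : Set K)) {ε δ : ℝ} (hε : 0 < ε) (hδ : 0 < δ)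
    {U : Set X} (hUo : IsOpen U) (hUne : U.Nonempty) (hUE : U ∩ Eset f ε = ∅)
    (m : ℕ) (a : ℕ → X) :
    ∃ y z : K, (∀ i ≤ m, |f (a i, y) - f (a i, z)| ≤ δ) ∧
      ∃ x ∈ U, f (x, y) - f (x, z) > ε / 4 := by
  classical
  by_contra hcon
  push_neg at hcon
  obtain ⟨x₀, hx₀⟩ := hUne
  have hempty := Set.eq_empty_iff_forall_notMem.mp hUE x₀
  rcases isEmpty_or_nonempty K with hKe | hKne
  · exact hempty ⟨hx₀, U, hUo, hx₀, fun x' _ x'' _ y => (hKe.elim y)⟩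
  have : Inhabited K := Classical.inhabited_of_nonempty hKne
  have hM : ∀ i : Fin (m + 1), ∃ Mi, ∀ y : K, |f (a i, y)| ≤ Mi := by
    intro i
    obtain ⟨Mi, hMi⟩ := hK2 (fun y => f (a i, y)) (hf.1 (a i))
    exact ⟨Mi, fun y => hMi y (Set.mem_univ y)⟩
  choose M hMspec using hM
  set Ψ : K → (Fin (m + 1) → ℝ) := fun y i => f (a i, y) with hΨ
  have hrange : Set.range Ψ ⊆ Set.pi Set.univ fun i => Set.Icc (-(M i)) (M i) := by
    rintro _ ⟨y, rfl⟩ i _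
    have := hMspec i y
    rw [abs_le] at this
    exact this
  have hScomp : IsCompact (closure (Set.range Ψ)) := by
    refine IsCompact.of_isClosed_subset (isCompact_univ_pi fun i => isCompact_Icc)
      isClosed_closure (closure_minimal hrange (isClosed_set_pi fun i _ => isClosed_Icc))
  have htb := hScomp.totallyBounded
  rw [Metric.totallyBounded_iff] at htb
  obtain ⟨t, htfin, htcover⟩ := htb (δ / 2) (by positivity)
  set T : Set (Fin (m + 1) → ℝ) := {c | c ∈ t ∧ ∃ y : K, dist (Ψ y) c < δ / 2} with hT
  have hTfin : T.Finite := htfin.subset fun c hc => hc.1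
  set rep : (Fin (m + 1) → ℝ) → K := fun c =>
    if hc : ∃ y : K, dist (Ψ y) c < δ / 2 then hc.choose else default with hrepdef
  have hrep : ∀ c ∈ T, dist (Ψ (rep c)) c < δ / 2 := by
    intro c hc
    have hce : ∃ y : K, dist (Ψ y) c < δ / 2 := hc.2
    simp only [hrepdef, dif_pos hce]
    exact hce.choose_spec
  set W : Set X := U ∩ ⋂ c ∈ T, {x | |f (x, rep c) - f (x₀, rep c)| < ε / 4} with hW
  have hWo : IsOpen W := by
    refine hUo.inter (hTfin.isOpen_biInter fun c hc => ?_)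
    exact isOpen_lt (((hf.2 (rep c)).sub continuous_const).abs) continuous_const
  have hx₀W : x₀ ∈ W := by
    refine ⟨hx₀, Set.mem_biInter fun c hc => ?_⟩
    simp only [Set.mem_setOf_eq, sub_self, abs_zero]
    positivity
  have hclaim : ∀ x' ∈ W, ∀ x'' ∈ W, ∀ y : K, |f (x', y) - f (x'', y)| ≤ ε := by
    intro x' hx' x'' hx'' y
    have hy : Ψ y ∈ ⋃ c ∈ t, Metric.ball c (δ / 2) :=
      htcover (subset_closure (Set.mem_range_self y))
    rw [Set.mem_iUnion₂] at hy
    obtain ⟨c, hct, hball⟩ := hy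
    rw [Metric.mem_ball] at hball
    have hcT : c ∈ T := ⟨hct, y, hball⟩
    set yc := rep c with hyc
    have hdyc : dist (Ψ yc) c < δ / 2 := hrep c hcT
    have hdist : dist (Ψ y) (Ψ yc) < δ := by
      calc dist (Ψ y) (Ψ yc) ≤ dist (Ψ y) c + dist (Ψ yc) c := dist_triangle_right _ _ _
        _ < δ / 2 + δ / 2 := by linarith
        _ = δ := by ring
    have hcoord : ∀ i ≤ m, |f (a i, y) - f (a i, yc)| ≤ δ := by
      intro i him
      have h1 : dist (Ψ y ⟨i, by omega⟩) (Ψ yc ⟨i, by omega⟩) ≤ dist (Ψ y) (Ψ yc) :=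
        dist_le_pi_dist _ _ _
      have h2 : Ψ y ⟨i, by omega⟩ = f (a i, y) := rfl
      have h3 : Ψ yc ⟨i, by omega⟩ = f (a i, yc) := rfl
      rw [h2, h3, Real.dist_eq] at h1
      linarith
    have hcoord' : ∀ i ≤ m, |f (a i, yc) - f (a i, y)| ≤ δ := by
      intro i him
      rw [abs_sub_comm]
      exact hcoord i him
    have flat : ∀ x ∈ U, |f (x, y) - f (x, yc)| ≤ ε / 4 := by
      intro x hx
      refine abs_le.2 ⟨?_, hcon y yc hcoord x hx⟩
      have := hcon yc y hcoord' x hx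
      linarith
    have e1 : |f (x', y) - f (x', yc)| ≤ ε / 4 := flat x' hx'.1
    have e4 : |f (x'', yc) - f (x'', y)| ≤ ε / 4 := by
      rw [abs_sub_comm]
      exact flat x'' hx''.1
    have e2 : |f (x', yc) - f (x₀, yc)| < ε / 4 := by
      have := Set.mem_iInter₂.mp hx'.2 c hcT
      exact this
    have e3 : |f (x₀, yc) - f (x'', yc)| < ε / 4 := by
      have := Set.mem_iInter₂.mp hx''.2 c hcT
      rw [abs_sub_comm]
      exact this
    have t1 : |f (x', y) - f (x₀, yc)| ≤
        |f (x', y) - f (x', yc)| + |f (x', yc) - f (x₀, yc)| := abs_sub_le _ _ _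
    have t2 : |f (x', y) - f (x'', yc)| ≤
        |f (x', y) - f (x₀, yc)| + |f (x₀, yc) - f (x'', yc)| := abs_sub_le _ _ _
    have t3 : |f (x', y) - f (x'', y)| ≤
        |f (x', y) - f (x'', yc)| + |f (x'', yc) - f (x'', y)| := abs_sub_le _ _ _
    linarith
  exact hempty ⟨hx₀, W, hWo, hx₀W, hclaim⟩

end WithK

/-! ### hist helpers -/

lemma hist_zero {A : Type*} (f : ℕ → A) : hist f 0 = [] := rfl

lemma hist_length {A : Type*} (f : ℕ → A) (n : ℕ) : (hist f n).length = n := by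
  simp [hist]

lemma hist_getLast? {A : Type*} (f : ℕ → A) (n : ℕ) :
    (hist f (n + 1)).getLast? = some (f n) := by
  unfold hist
  rw [List.ofFn_succ']
  simp

/-- Baire property from the game hypothesis. -/
lemma baire_of_defavorable
    (hX : SigmaGammaBetaDefavorable X {g : X → ℝ | Continuous g}) :
    BaireSpace X := by
  constructor
  intro Gs hGo hGd
  rw [dense_iff_inter_open]
  intro V₀ hV₀o hV₀ne
  by_contra hempty
  rw [Set.not_nonempty_iff_eq_empty] at hempty
  set σ : BetaStrategy X :=
    fun l => (l.getLast?).elim V₀ (fun p => p.1 ∩ Gs (l.length - 1)) with hσ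
  have hσ0 : ∀ b : ℕ → Set X × X, σ (hist b 0) = V₀ := by
    intro b; simp [hσ, hist_zero]
  have hσs : ∀ (b : ℕ → Set X × X) (n : ℕ), σ (hist b (n + 1)) = (b n).1 ∩ Gs n := by
    intro b n; simp [hσ, hist_getLast?, hist_length]
  refine hX ⟨σ, ?_, ?_⟩
  · intro U a n hn
    rcases n with _ | m
    · rw [hσ0]
      exact ⟨hV₀o, hV₀ne, fun m hm => by omega⟩
    · obtain ⟨hUo, hUne, _⟩ := hn m (Nat.lt_succ_self m)
      rw [hσs]
      refine ⟨hUo.inter (hGo m), ?_, ?_⟩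
      · obtain ⟨x, hx1, hx2⟩ := (hGd m).inter_open_nonempty (U m) hUo hUne
        exact ⟨x, hx1, hx2⟩
      · intro m' hm'
        have : m' = m := by omega
        subst this
        exact Set.inter_subset_left
  · intro U a hleg hwin
    obtain ⟨t, ht, -⟩ := hwin (fun _ => (0:ℝ)) (by
      show Continuous _
      exact continuous_const)
    have htV₀ : t ∈ V₀ := by
      have h0 := (hleg 1) 0 (by omega)
      have := h0.2.2 (Set.mem_iInter.1 ht 0)
      rwa [hσ0] at this
    have htG : ∀ n, t ∈ Gs n := by
      intro n
      have h1 := (hleg (n + 2)) (n + 1) (by omega)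
      have := h1.2.2 (Set.mem_iInter.1 ht (n + 1))
      rw [hσs] at this
      exact this.2
    have : t ∈ V₀ ∩ ⋂ n, Gs n := ⟨htV₀, Set.mem_iInter.2 htG⟩
    rw [hempty] at this
    exact this

section DenseE

variable {K : Type*} [TopologicalSpace K]

/-- Density of the equicontinuity sets. -/
lemma dense_Eset
    (hX : SigmaGammaBetaDefavorable X {g : X → ℝ | Continuous g})
    (hcc : ∀ Y : Set (Cp X), BoundedIn Y → RelCountablyCompact Y)
    (hK2 : BoundedIn (Set.univ : Set K))
    (f : X × K → ℝ) (hf : SeparatelyContinuous f) {ε : ℝ} (hε : 0 < ε) :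
    Dense (Eset f ε) := by
  classical
  rw [dense_iff_inter_open]
  by_contra hnd
  push_neg at hnd
  obtain ⟨V₀, hV₀o, hV₀ne, hV₀E⟩ := hnd
  obtain ⟨x₀, hx₀⟩ := hV₀ne
  rcases isEmpty_or_nonempty K with hKe | hKne
  · exact (Set.eq_empty_iff_forall_notMem.mp hV₀E x₀)
      ⟨hx₀, V₀, hV₀o, hx₀, fun x' _ x'' _ yy => hKe.elim yy⟩
  have hKinh : Inhabited K := Classical.inhabited_of_nonempty hKne
  have hcrux : ∀ (U : Set X) (m : ℕ) (a : ℕ → X), ∃ yzp : K × K,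
      (IsOpen U ∧ U.Nonempty ∧ U ⊆ V₀) →
      ((∀ i ≤ m, |f (a i, yzp.1) - f (a i, yzp.2)| ≤ 1 / (m + 1)) ∧
        ∃ x ∈ U, f (x, yzp.1) - f (x, yzp.2) > ε / 4) := by
    intro U m a
    by_cases hU : IsOpen U ∧ U.Nonempty ∧ U ⊆ V₀
    · have hUE : U ∩ Eset f ε = ∅ := by
        rw [Set.eq_empty_iff_forall_notMem]
        rintro x ⟨hxU, hxE⟩
        exact (Set.eq_empty_iff_forall_notMem.mp hV₀E x) ⟨hU.2.2 hxU, hxE⟩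
      obtain ⟨yy, zz, h1, h2⟩ := crux f hf hK2 hε
        (show (0:ℝ) < 1 / (m + 1) by positivity) hU.1 hU.2.1 hUE m a
      exact ⟨(yy, zz), fun _ => ⟨h1, h2⟩⟩
    · exact ⟨(default, default), fun h => absurd h hU⟩
  choose yz hyz using hcrux
  set pts : List (Set X × X) → ℕ → X := fun l i => (l.map Prod.snd).getD i x₀ with hpts
  set σ : BetaStrategy X := fun l =>
    (l.getLast?).elim V₀ (fun p =>
      p.1 ∩ {x | f (x, (yz p.1 (l.length - 1) (pts l)).1) -
        f (x, (yz p.1 (l.length - 1) (pts l)).2) > ε / 4}) with hσ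
  have hσ0 : ∀ b : ℕ → Set X × X, σ (hist b 0) = V₀ := by
    intro b; simp [hσ, hist_zero]
  have hσs : ∀ (b : ℕ → Set X × X) (n : ℕ), σ (hist b (n + 1)) =
      (b n).1 ∩ {x | f (x, (yz (b n).1 n (pts (hist b (n + 1)))).1) -
        f (x, (yz (b n).1 n (pts (hist b (n + 1)))).2) > ε / 4} := by
    intro b n
    simp [hσ, hist_getLast?, hist_length]
  have hptsspec : ∀ (b : ℕ → Set X × X) (n i : ℕ), i < n → pts (hist b n) i = (b i).2 := by
    intro b n i hi
    simp only [hpts, hist, List.map_ofFn]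
    rw [List.getD_eq_getElem?_getD, List.getElem?_ofFn]
    simp [List.ofFnNthVal, hi]
  have hC : ∀ (U : ℕ → Set X) (a : ℕ → X) (n : ℕ), AlphaLegal σ U a n →
      IsOpen (σ (hist (fun j => (U j, a j)) n)) ∧
      (σ (hist (fun j => (U j, a j)) n)).Nonempty ∧
      σ (hist (fun j => (U j, a j)) n) ⊆ V₀ ∧
      ∀ m, n = m + 1 → σ (hist (fun j => (U j, a j)) n) ⊆ U m := by
    intro U a n
    induction n with
    | zero =>
      intro _
      rw [hσ0]
      exact ⟨hV₀o, ⟨x₀, hx₀⟩, subset_rfl, fun m hm => by omega⟩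
    | succ m ih =>
      intro hleg
      have hlegm : AlphaLegal σ U a m := fun i hi => hleg i (by omega)
      obtain ⟨-, -, hsubV₀, -⟩ := ih hlegm
      obtain ⟨hUo, hUne, hUsub⟩ := hleg m (by omega)
      have hUV₀ : U m ⊆ V₀ := hUsub.trans hsubV₀
      obtain ⟨hsmall, xh, hxhU, hxhgap⟩ := hyz (U m) m
        (pts (hist (fun j => (U j, a j)) (m + 1))) ⟨hUo, hUne, hUV₀⟩
      rw [hσs]
      refine ⟨?_, ⟨xh, hxhU, hxhgap⟩, Set.inter_subset_left.trans hUV₀, ?_⟩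
      · exact hUo.inter (isOpen_lt continuous_const ((hf.2 _).sub (hf.2 _)))
      · intro m' hm'
        have : m' = m := by omega
        subst this
        exact Set.inter_subset_left
  refine hX ⟨σ, ?_, ?_⟩
  · intro U a n h
    obtain ⟨h1, h2, -, h4⟩ := hC U a n h
    exact ⟨h1, h2, h4⟩
  · intro U a hleg hwin
    have hcond : ∀ n, IsOpen (U n) ∧ (U n).Nonempty ∧ U n ⊆ V₀ := by
      intro n
      obtain ⟨hUo, hUne, hUsub⟩ := hleg (n + 1) n (by omega)
      exact ⟨hUo, hUne, hUsub.trans (hC U a n (hleg n)).2.2.1⟩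
    have hspec := fun n => hyz (U n) n
      (pts (hist (fun j => (U j, a j)) (n + 1))) (hcond n)
    obtain ⟨g, hg⟩ := exists_cluster_diffs f hf hK2 hcc
      (fun n => (yz (U n) n (pts (hist (fun j => (U j, a j)) (n + 1)))).1)
      (fun n => (yz (U n) n (pts (hist (fun j => (U j, a j)) (n + 1)))).2)
    have hsmall : ∀ n i, i ≤ n →
        |f (a i, (yz (U n) n (pts (hist (fun j => (U j, a j)) (n + 1)))).1) -
          f (a i, (yz (U n) n (pts (hist (fun j => (U j, a j)) (n + 1)))).2)| ≤
          1 / (n + 1) := by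
      intro n i hi
      have h1 := (hspec n).1 i hi
      rwa [hptsspec (fun j => (U j, a j)) (n + 1) i (by omega)] at h1
    have hgz : ∀ i, g.1 (a i) = 0 := by
      intro i
      refine cluster_eq_limit (mapClusterPt_apply hg (a i)) ?_
      have hb1 : Filter.Tendsto (fun n : ℕ => 1 / ((n : ℝ) + 1)) atTop (𝓝 0) :=
        tendsto_one_div_add_atTop_nhds_zero_nat
      have hb2 := hb1.neg
      rw [neg_zero] at hb2
      refine tendsto_of_tendsto_of_tendsto_of_le_of_le' hb2 hb1 ?_ ?_
      · filter_upwards [Filter.eventually_ge_atTop i] with n hn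
        have := hsmall n i hn
        rw [abs_le] at this
        have hcast : (1 : ℝ) / (n + 1) = 1 / ((n : ℝ) + 1) := by norm_num
        show -(1 / ((n : ℝ) + 1)) ≤ (diffSub f hf _ _).1 (a i)
        simp only [diffSub]
        rw [← hcast]
        linarith [this.1]
      · filter_upwards [Filter.eventually_ge_atTop i] with n hn
        have := hsmall n i hn
        rw [abs_le] at this
        have hcast : (1 : ℝ) / (n + 1) = 1 / ((n : ℝ) + 1) := by norm_num
        show (diffSub f hf _ _).1 (a i) ≤ 1 / ((n : ℝ) + 1)
        simp only [diffSub]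
        rw [← hcast]
        linarith [this.2]
    have hgap : ∀ t, t ∈ (⋂ n, U n) → ε / 4 ≤ g.1 t := by
      intro t ht
      have hvals : ∀ n, ε / 4 <
          (diffSub f hf (yz (U n) n (pts (hist (fun j => (U j, a j)) (n + 1)))).1
            (yz (U n) n (pts (hist (fun j => (U j, a j)) (n + 1)))).2).1 t := by
        intro n
        have h1 : t ∈ U (n + 1) := Set.mem_iInter.1 ht (n + 1)
        have h2 := hleg (n + 2) (n + 1) (by omega)
        have h3 := h2.2.2 h1
        rw [hσs] at h3
        exact h3.2
      have hcl := mapClusterPt_apply hg t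
      have hmem : g.1 t ∈ closure (Set.range fun n =>
          (diffSub f hf (yz (U n) n (pts (hist (fun j => (U j, a j)) (n + 1)))).1
            (yz (U n) n (pts (hist (fun j => (U j, a j)) (n + 1)))).2).1 t) := by
        rw [mem_closure_iff_clusterPt]
        exact hcl.clusterPt.mono (le_principal_iff.2 Filter.range_mem_map)
      have hsub : closure (Set.range fun n =>
          (diffSub f hf (yz (U n) n (pts (hist (fun j => (U j, a j)) (n + 1)))).1
            (yz (U n) n (pts (hist (fun j => (U j, a j)) (n + 1)))).2).1 t) ⊆
          Set.Ici (ε / 4) := by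
        refine closure_minimal ?_ isClosed_Ici
        rintro w ⟨n, rfl⟩
        exact le_of_lt (hvals n)
      exact hsub hmem
    obtain ⟨t, ht, hclmem⟩ := hwin g.1 g.2
    have hfun : (fun n => g.1 (a n)) = fun _ => (0 : ℝ) := funext fun n => hgz n
    rw [hfun, Set.range_const, closure_singleton, Set.mem_singleton_iff] at hclmem
    have := hgap t ht
    rw [hclmem] at this
    linarith

end DenseE

end SJAux

end Aux

end SepJoint
open SepJoint in
/-- Corollary 3.3 (1): `X` σ_{C(X)}-β-defavorable, `K` pseudocompact, and
every bounded subspace of `C_p(X)` relatively countably compact in `C_p(X)`; then `f` is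
jointly continuous at each point of `R × K` for some dense Gδ set `R ⊆ X`. -/
theorem denseGdelta_joint_continuity_of_pseudocompact
    {X K : Type*} [TopologicalSpace X] [TopologicalSpace K]
    (hX : SigmaGammaBetaDefavorable X {g : X → ℝ | Continuous g})
    (hK : Pseudocompact K)
    (hcc : ∀ Y : Set {g : X → ℝ // Continuous g}, BoundedIn Y → RelCountablyCompact Y)
    (f : X × K → ℝ) (hf : SeparatelyContinuous f) :
    ∃ R : Set X, Dense R ∧ IsGδ R ∧ ∀ x ∈ R, ∀ y : K, ContinuousAt f (x, y) := by
  classical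
  refine ⟨⋂ n : ℕ, SJAux.Eset f (1 / (n + 1)), ?_, ?_, ?_⟩
  · have hb : BaireSpace X := SJAux.baire_of_defavorable hX
    exact dense_iInter_of_isOpen (fun n => SJAux.isOpen_Eset f _)
      (fun n => SJAux.dense_Eset hX hcc hK.2 f hf (by positivity))
  · exact IsGδ.iInter fun n => (SJAux.isOpen_Eset f _).isGδ
  · intro x hx y
    refine SJAux.continuousAt_of_mem_Eset f hf x ?_ y
    intro ε hε
    obtain ⟨n, hn⟩ := exists_nat_one_div_lt hε
    exact SJAux.Eset_mono f (le_of_lt hn) (Set.mem_iInter.1 hx n)
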